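/- For every n ≥ 1 and every bounded Lipschitz function f : [0,1) → ℂ, the operator L_n defined by (L_n f)(x) = v_n'(x) f(v_n(x)) + w_n'(x) f(w_n(x)) satisfies ‖L_n f‖_Lip ≤ a_n (32π n⁴ a_n + 8) ‖f‖_Lip. -/

import Mathlib

open MeasureTheory Set Filter

noncomputable section

namespace Gouezel

/-- `b a n = 4 * ∑_{k=1}^n a_k` (left endpoints of the intervals `I_n`). -/
def b (a : ℕ → ℝ) (n : ℕ) : ℝ := 4 * ∑ k ∈ Finset.range n, a (k + 1)

/-- `b_∞ = 4 * ∑_{n=1}^∞ a_n`. -/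
def binf (a : ℕ → ℝ) : ℝ := 4 * ∑' n : ℕ, a (n + 1)

/-- The length `|J| = 1 - b_∞` of the interval `J = [b_∞, 1)`. -/
def lenJ (a : ℕ → ℝ) : ℝ := 1 - binf a

/-- `v_n'(x) = a_n (1 + 2 cos²(2π n⁴ x))`. -/
def vd (a : ℕ → ℝ) (n : ℕ) (x : ℝ) : ℝ :=
  a n * (1 + 2 * Real.cos (2 * Real.pi * (n : ℝ) ^ 4 * x) ^ 2)

/-- `w_n'(x) = a_n (1 + 2 sin²(2π n⁴ x))`. -/
def wd (a : ℕ → ℝ) (n : ℕ) (x : ℝ) : ℝ :=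
  a n * (1 + 2 * Real.sin (2 * Real.pi * (n : ℝ) ^ 4 * x) ^ 2)

/-- The inverse branch `v_n(x) = b_{n-1} + ∫_0^x v_n'(t) dt`. -/
def v (a : ℕ → ℝ) (n : ℕ) (x : ℝ) : ℝ := b a (n - 1) + ∫ t in (0:ℝ)..x, vd a n t

/-- The inverse branch `w_n(x) = b_{n-1} + 2 a_n + ∫_0^x w_n'(t) dt`. -/
def w (a : ℕ → ℝ) (n : ℕ) (x : ℝ) : ℝ :=
  b a (n - 1) + 2 * a n + ∫ t in (0:ℝ)..x, wd a n t

/-- The affine inverse branches `u_j(x) = b_∞ + (j-1)|J|/N + (|J|/N) x`, `1 ≤ j ≤ N`. -/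
def u (a : ℕ → ℝ) (N : ℕ) (j : ℕ) (x : ℝ) : ℝ :=
  binf a + ((j : ℝ) - 1) * (lenJ a / N) + (lenJ a / N) * x

/-- The transfer operator on complex-valued functions. -/
def L (a : ℕ → ℝ) (N : ℕ) (f : ℝ → ℂ) (x : ℝ) : ℂ :=
  (∑' n : ℕ, ((vd a (n + 1) x : ℂ) * f (v a (n + 1) x)
      + (wd a (n + 1) x : ℂ) * f (w a (n + 1) x)))
    + ((lenJ a / (N : ℝ) : ℝ) : ℂ) * ∑ j ∈ Finset.range N, f (u a N (j + 1) x)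

/-- The transfer operator on real-valued functions. -/
def LR (a : ℕ → ℝ) (N : ℕ) (f : ℝ → ℝ) (x : ℝ) : ℝ :=
  (∑' n : ℕ, (vd a (n + 1) x * f (v a (n + 1) x) + wd a (n + 1) x * f (w a (n + 1) x)))
    + (lenJ a / N) * ∑ j ∈ Finset.range N, f (u a N (j + 1) x)

/-- The part `L_n` of the transfer operator coming from the branches `v_n, w_n`. -/
def Ln (a : ℕ → ℝ) (n : ℕ) (f : ℝ → ℂ) (x : ℝ) : ℂ :=
  (vd a n x : ℂ) * f (v a n x) + (wd a n x : ℂ) * f (w a n x)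

/-- Sup norm of `f` on `[0,1)`. -/
def supNorm (f : ℝ → ℂ) : ℝ := ⨆ x : Ico (0:ℝ) 1, ‖f x.1‖

/-- Best Lipschitz constant of `f` on `[0,1)` (the term at `x = y` is `0/0 = 0`). -/
def lipConst (f : ℝ → ℂ) : ℝ :=
  ⨆ p : Ico (0:ℝ) 1 × Ico (0:ℝ) 1, ‖f p.1.1 - f p.2.1‖ / |p.1.1 - p.2.1|

/-- Lipschitz norm `‖f‖_Lip = sup|f| + Lip(f)` on `[0,1)`. -/
def lipNorm (f : ℝ → ℂ) : ℝ := supNorm f + lipConst f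

/-- `f` is bounded and Lipschitz on `[0,1)`. -/
def BddLip (f : ℝ → ℂ) : Prop :=
  ∃ K : ℝ, (∀ x ∈ Ico (0:ℝ) 1, ‖f x‖ ≤ K) ∧
    ∀ x ∈ Ico (0:ℝ) 1, ∀ y ∈ Ico (0:ℝ) 1, ‖f x - f y‖ ≤ K * |x - y|

/-- The specific choice `a_n = 1/(100 n³)`. -/
def aa (n : ℕ) : ℝ := 1 / (100 * (n : ℝ) ^ 3)

/-- Standing hypotheses on the sequence `(a_n)`: positivity and `∑ a_n < 1/4`. -/
def StdHyp (a : ℕ → ℝ) : Prop :=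
  (∀ n : ℕ, 1 ≤ n → 0 < a n) ∧ Summable (fun n : ℕ => a (n + 1)) ∧
    (∑' n : ℕ, a (n + 1)) < 1 / 4

/-- `T : [0,1) → [0,1)` has the maps `v_n, w_n` (`n ≥ 1`) and `u_j` (`1 ≤ j ≤ N`)
as inverse branches. -/
def InverseBranches (a : ℕ → ℝ) (N : ℕ) (T : ℝ → ℝ) : Prop :=
  MapsTo T (Ico (0:ℝ) 1) (Ico (0:ℝ) 1) ∧
    ∀ x ∈ Ico (0:ℝ) 1,
      (∀ n : ℕ, 1 ≤ n → T (v a n x) = x ∧ T (w a n x) = x) ∧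
      (∀ j : ℕ, 1 ≤ j → j ≤ N → T (u a N j x) = x)

/-! ### Auxiliary lemmas -/

lemma abs_sin_sub_le (x y : ℝ) : |Real.sin x - Real.sin y| ≤ |x - y| := by
  have h1 : |Real.sin ((x - y) / 2)| ≤ |x - y| / 2 := by
    calc |Real.sin ((x - y) / 2)| ≤ |(x - y) / 2| := Real.abs_sin_le_abs
      _ = |x - y| / 2 := by rw [abs_div, abs_two]
  have h2 : |Real.cos ((x + y) / 2)| ≤ 1 := Real.abs_cos_le_one _
  have h4 : (0:ℝ) ≤ |Real.cos ((x + y) / 2)| := abs_nonneg _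
  rw [Real.sin_sub_sin, abs_mul, abs_mul, abs_two]
  nlinarith [mul_le_mul h1 h2 h4 (by positivity : (0:ℝ) ≤ |x - y| / 2)]

lemma abs_cos_sub_le (x y : ℝ) : |Real.cos x - Real.cos y| ≤ |x - y| := by
  have h1 : |Real.sin ((x - y) / 2)| ≤ |x - y| / 2 := by
    calc |Real.sin ((x - y) / 2)| ≤ |(x - y) / 2| := Real.abs_sin_le_abs
      _ = |x - y| / 2 := by rw [abs_div, abs_two]
  have h2 : |Real.sin ((x + y) / 2)| ≤ 1 := Real.abs_sin_le_one _
  have h4 : (0:ℝ) ≤ |Real.sin ((x + y) / 2)| := abs_nonneg _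
  rw [Real.cos_sub_cos, abs_mul, abs_mul, show |(-2:ℝ)| = 2 by norm_num]
  nlinarith [mul_le_mul h2 h1 (abs_nonneg _) (by positivity : (0:ℝ) ≤ (1:ℝ))]

lemma vd_eq (a : ℕ → ℝ) (n : ℕ) (x : ℝ) :
    vd a n x = a n * (2 + Real.cos (4 * Real.pi * (n : ℝ) ^ 4 * x)) := by
  rw [vd, Real.cos_sq, show (2:ℝ) * (2 * Real.pi * (n:ℝ)^4 * x) = 4 * Real.pi * (n:ℝ)^4 * x by
    ring]
  ring

lemma wd_eq (a : ℕ → ℝ) (n : ℕ) (x : ℝ) :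
    wd a n x = a n * (2 - Real.cos (4 * Real.pi * (n : ℝ) ^ 4 * x)) := by
  rw [wd, Real.sin_sq, Real.cos_sq, show (2:ℝ) * (2 * Real.pi * (n:ℝ)^4 * x)
    = 4 * Real.pi * (n:ℝ)^4 * x by ring]
  ring

lemma k_pos {n : ℕ} (hn : 1 ≤ n) : 0 < 4 * Real.pi * (n : ℝ) ^ 4 := by
  have : (1:ℝ) ≤ (n:ℝ) := by exact_mod_cast hn
  positivity

lemma integral_cos_k {n : ℕ} (hn : 1 ≤ n) (x : ℝ) :
    ∫ t in (0:ℝ)..x, Real.cos (4 * Real.pi * (n : ℝ) ^ 4 * t)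
      = Real.sin (4 * Real.pi * (n : ℝ) ^ 4 * x) / (4 * Real.pi * (n : ℝ) ^ 4) := by
  have hk := (k_pos hn).ne'
  rw [intervalIntegral.integral_comp_mul_left Real.cos hk, mul_zero, integral_cos,
    Real.sin_zero, sub_zero, smul_eq_mul, inv_mul_eq_div]

lemma integral_vd {n : ℕ} (hn : 1 ≤ n) (a : ℕ → ℝ) (x : ℝ) :
    ∫ t in (0:ℝ)..x, vd a n t
      = a n * (2 * x + Real.sin (4 * Real.pi * (n : ℝ) ^ 4 * x) / (4 * Real.pi * (n : ℝ) ^ 4)) := by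
  simp only [vd_eq]
  rw [intervalIntegral.integral_const_mul,
    intervalIntegral.integral_add intervalIntegrable_const
      (Continuous.intervalIntegrable (by fun_prop) 0 x),
    integral_cos_k hn, intervalIntegral.integral_const, smul_eq_mul]
  ring

lemma integral_wd {n : ℕ} (hn : 1 ≤ n) (a : ℕ → ℝ) (x : ℝ) :
    ∫ t in (0:ℝ)..x, wd a n t
      = a n * (2 * x - Real.sin (4 * Real.pi * (n : ℝ) ^ 4 * x) / (4 * Real.pi * (n : ℝ) ^ 4)) := by
  simp only [wd_eq, sub_eq_add_neg (2:ℝ)]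
  rw [intervalIntegral.integral_const_mul,
    intervalIntegral.integral_add intervalIntegrable_const
      (Continuous.intervalIntegrable (by fun_prop) 0 x),
    intervalIntegral.integral_neg, integral_cos_k hn, intervalIntegral.integral_const,
    smul_eq_mul]
  ring

lemma v_eq {n : ℕ} (hn : 1 ≤ n) (a : ℕ → ℝ) (x : ℝ) :
    v a n x = b a (n - 1)
      + a n * (2 * x + Real.sin (4 * Real.pi * (n : ℝ) ^ 4 * x) / (4 * Real.pi * (n : ℝ) ^ 4)) := by
  rw [v, integral_vd hn]

lemma w_eq {n : ℕ} (hn : 1 ≤ n) (a : ℕ → ℝ) (x : ℝ) :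
    w a n x = b a (n - 1) + 2 * a n
      + a n * (2 * x - Real.sin (4 * Real.pi * (n : ℝ) ^ 4 * x) / (4 * Real.pi * (n : ℝ) ^ 4)) := by
  rw [w, integral_wd hn]

lemma sin_shift (n : ℕ) (x : ℝ) :
    Real.sin (4 * Real.pi * (n : ℝ) ^ 4 * x)
      = Real.sin (4 * Real.pi * (n : ℝ) ^ 4 * (x - 1)) := by
  have : 4 * Real.pi * (n : ℝ) ^ 4 * x
      = 4 * Real.pi * (n : ℝ) ^ 4 * (x - 1) + ((2 * n ^ 4 : ℤ) : ℝ) * (2 * Real.pi) := by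
    push_cast; ring
  rw [this, Real.sin_add_int_mul_two_pi]

lemma sin_bounds {n : ℕ} (hn : 1 ≤ n) {x : ℝ} (hx0 : 0 ≤ x) (hx1 : x ≤ 1) :
    |Real.sin (4 * Real.pi * (n : ℝ) ^ 4 * x)| ≤ 4 * Real.pi * (n : ℝ) ^ 4 * x ∧
    |Real.sin (4 * Real.pi * (n : ℝ) ^ 4 * x)| ≤ 4 * Real.pi * (n : ℝ) ^ 4 * (1 - x) := by
  have hk := k_pos hn
  constructor
  · calc |Real.sin (4 * Real.pi * (n : ℝ) ^ 4 * x)| ≤ |4 * Real.pi * (n : ℝ) ^ 4 * x| :=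
        Real.abs_sin_le_abs
      _ = 4 * Real.pi * (n : ℝ) ^ 4 * x := abs_of_nonneg (by positivity)
  · rw [sin_shift]
    calc |Real.sin (4 * Real.pi * (n : ℝ) ^ 4 * (x - 1))|
        ≤ |4 * Real.pi * (n : ℝ) ^ 4 * (x - 1)| := Real.abs_sin_le_abs
      _ = 4 * Real.pi * (n : ℝ) ^ 4 * (1 - x) := by
          rw [abs_mul, abs_of_nonneg hk.le, abs_of_nonpos (by linarith)]; ring

lemma b_facts {a : ℕ → ℝ} (ha : StdHyp a) {n : ℕ} (hn : 1 ≤ n) :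
    0 < a n ∧ a n < 1 / 4 ∧ 0 ≤ b a (n - 1) ∧ b a (n - 1) + 4 * a n ≤ binf a ∧ binf a < 1 := by
  obtain ⟨hpos, hsum, hlt⟩ := ha
  have hterm : ∀ j, 0 ≤ a (j + 1) := fun j => (hpos (j + 1) (by omega)).le
  have h1 : 0 < a n := hpos n hn
  have h2 : a n ≤ ∑' j : ℕ, a (j + 1) := by
    have := Summable.le_tsum hsum (n - 1) (fun j _ => hterm j)
    rwa [Nat.sub_add_cancel hn] at this
  have hb0 : 0 ≤ b a (n - 1) := by
    rw [b]
    have : (0:ℝ) ≤ ∑ k ∈ Finset.range (n - 1), a (k + 1) :=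
      Finset.sum_nonneg fun k _ => hterm k
    linarith
  have hbn : b a (n - 1) + 4 * a n = b a n := by
    rw [b, b]
    conv_rhs => rw [show n = (n - 1) + 1 by omega]
    rw [Finset.sum_range_succ, Nat.sub_add_cancel hn]
    ring
  have h4 : b a n ≤ binf a := by
    rw [b, binf]
    have := Summable.sum_le_tsum (Finset.range n) (fun i _ => hterm i) hsum
    linarith
  exact ⟨h1, lt_of_le_of_lt h2 hlt, hb0, by linarith, by rw [binf]; linarith⟩

lemma v_mem {a : ℕ → ℝ} (ha : StdHyp a) {n : ℕ} (hn : 1 ≤ n) {x : ℝ}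
    (hx : x ∈ Ico (0:ℝ) 1) : v a n x ∈ Ico (0:ℝ) 1 := by
  obtain ⟨h1, h2, hb0, hbs, hbinf⟩ := b_facts ha hn
  obtain ⟨hs1, hs2⟩ := sin_bounds hn hx.1 hx.2.le
  have hk := k_pos hn
  obtain ⟨hx0, hx1⟩ := hx
  rw [v_eq hn]
  have hd1 : -x ≤ Real.sin (4 * Real.pi * (n : ℝ) ^ 4 * x) / (4 * Real.pi * (n : ℝ) ^ 4) := by
    rw [le_div_iff₀ hk]
    nlinarith [abs_le.1 hs1]
  have hd2 : Real.sin (4 * Real.pi * (n : ℝ) ^ 4 * x) / (4 * Real.pi * (n : ℝ) ^ 4) ≤ 1 - x := by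
    rw [div_le_iff₀ hk]
    nlinarith [abs_le.1 hs2]
  constructor
  · have hnn : (0:ℝ) ≤ 2 * x + Real.sin (4 * Real.pi * (n : ℝ) ^ 4 * x)
        / (4 * Real.pi * (n : ℝ) ^ 4) := by linarith
    nlinarith
  · have hle : 2 * x + Real.sin (4 * Real.pi * (n : ℝ) ^ 4 * x)
        / (4 * Real.pi * (n : ℝ) ^ 4) ≤ 2 := by linarith
    nlinarith

lemma w_mem {a : ℕ → ℝ} (ha : StdHyp a) {n : ℕ} (hn : 1 ≤ n) {x : ℝ}
    (hx : x ∈ Ico (0:ℝ) 1) : w a n x ∈ Ico (0:ℝ) 1 := by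
  obtain ⟨h1, h2, hb0, hbs, hbinf⟩ := b_facts ha hn
  obtain ⟨hs1, hs2⟩ := sin_bounds hn hx.1 hx.2.le
  have hk := k_pos hn
  obtain ⟨hx0, hx1⟩ := hx
  rw [w_eq hn]
  have hd1 : Real.sin (4 * Real.pi * (n : ℝ) ^ 4 * x) / (4 * Real.pi * (n : ℝ) ^ 4) ≤ x := by
    rw [div_le_iff₀ hk]
    nlinarith [abs_le.1 hs1]
  have hd2 : -(1 - x) ≤ Real.sin (4 * Real.pi * (n : ℝ) ^ 4 * x)
      / (4 * Real.pi * (n : ℝ) ^ 4) := by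
    rw [le_div_iff₀ hk]
    nlinarith [abs_le.1 hs2]
  constructor
  · have hnn : (0:ℝ) ≤ 2 * x - Real.sin (4 * Real.pi * (n : ℝ) ^ 4 * x)
        / (4 * Real.pi * (n : ℝ) ^ 4) := by linarith
    nlinarith
  · have hle : 2 * x - Real.sin (4 * Real.pi * (n : ℝ) ^ 4 * x)
        / (4 * Real.pi * (n : ℝ) ^ 4) ≤ 2 := by linarith
    nlinarith

lemma v_lip {a : ℕ → ℝ} {n : ℕ} (hn : 1 ≤ n) (han : 0 ≤ a n) (x y : ℝ) :
    |v a n x - v a n y| ≤ 3 * a n * |x - y| := by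
  have hk := k_pos hn
  have hdiff : v a n x - v a n y = a n * (2 * (x - y)
      + (Real.sin (4 * Real.pi * (n : ℝ) ^ 4 * x) - Real.sin (4 * Real.pi * (n : ℝ) ^ 4 * y))
        / (4 * Real.pi * (n : ℝ) ^ 4)) := by
    rw [v_eq hn, v_eq hn]; ring
  have hsin : |Real.sin (4 * Real.pi * (n : ℝ) ^ 4 * x)
      - Real.sin (4 * Real.pi * (n : ℝ) ^ 4 * y)| ≤ 4 * Real.pi * (n : ℝ) ^ 4 * |x - y| := by
    calc |Real.sin (4 * Real.pi * (n : ℝ) ^ 4 * x) - Real.sin (4 * Real.pi * (n : ℝ) ^ 4 * y)|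
        ≤ |4 * Real.pi * (n : ℝ) ^ 4 * x - 4 * Real.pi * (n : ℝ) ^ 4 * y| := abs_sin_sub_le _ _
      _ = 4 * Real.pi * (n : ℝ) ^ 4 * |x - y| := by
          rw [← mul_sub, abs_mul, abs_of_nonneg hk.le]
  have hinner : |2 * (x - y)
      + (Real.sin (4 * Real.pi * (n : ℝ) ^ 4 * x) - Real.sin (4 * Real.pi * (n : ℝ) ^ 4 * y))
        / (4 * Real.pi * (n : ℝ) ^ 4)| ≤ 3 * |x - y| := by
    calc |2 * (x - y)
        + (Real.sin (4 * Real.pi * (n : ℝ) ^ 4 * x) - Real.sin (4 * Real.pi * (n : ℝ) ^ 4 * y))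
          / (4 * Real.pi * (n : ℝ) ^ 4)|
        ≤ |2 * (x - y)| + |(Real.sin (4 * Real.pi * (n : ℝ) ^ 4 * x)
            - Real.sin (4 * Real.pi * (n : ℝ) ^ 4 * y)) / (4 * Real.pi * (n : ℝ) ^ 4)| :=
          abs_add_le _ _
      _ ≤ 2 * |x - y| + (4 * Real.pi * (n : ℝ) ^ 4 * |x - y|) / (4 * Real.pi * (n : ℝ) ^ 4) := by
          rw [abs_mul, abs_two, abs_div, abs_of_nonneg hk.le]
          gcongr
      _ = 3 * |x - y| := by field_simp; ring
  rw [hdiff, abs_mul, abs_of_nonneg han]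
  calc a n * |2 * (x - y)
      + (Real.sin (4 * Real.pi * (n : ℝ) ^ 4 * x) - Real.sin (4 * Real.pi * (n : ℝ) ^ 4 * y))
        / (4 * Real.pi * (n : ℝ) ^ 4)| ≤ a n * (3 * |x - y|) :=
      mul_le_mul_of_nonneg_left hinner han
    _ = 3 * a n * |x - y| := by ring

lemma w_lip {a : ℕ → ℝ} {n : ℕ} (hn : 1 ≤ n) (han : 0 ≤ a n) (x y : ℝ) :
    |w a n x - w a n y| ≤ 3 * a n * |x - y| := by
  have hk := k_pos hn
  have hdiff : w a n x - w a n y = a n * (2 * (x - y)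
      + (Real.sin (4 * Real.pi * (n : ℝ) ^ 4 * y) - Real.sin (4 * Real.pi * (n : ℝ) ^ 4 * x))
        / (4 * Real.pi * (n : ℝ) ^ 4)) := by
    rw [w_eq hn, w_eq hn]; ring
  have hsin : |Real.sin (4 * Real.pi * (n : ℝ) ^ 4 * y)
      - Real.sin (4 * Real.pi * (n : ℝ) ^ 4 * x)| ≤ 4 * Real.pi * (n : ℝ) ^ 4 * |x - y| := by
    calc |Real.sin (4 * Real.pi * (n : ℝ) ^ 4 * y) - Real.sin (4 * Real.pi * (n : ℝ) ^ 4 * x)|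
        ≤ |4 * Real.pi * (n : ℝ) ^ 4 * y - 4 * Real.pi * (n : ℝ) ^ 4 * x| := abs_sin_sub_le _ _
      _ = 4 * Real.pi * (n : ℝ) ^ 4 * |x - y| := by
          rw [← mul_sub, abs_mul, abs_of_nonneg hk.le, abs_sub_comm]
  have hinner : |2 * (x - y)
      + (Real.sin (4 * Real.pi * (n : ℝ) ^ 4 * y) - Real.sin (4 * Real.pi * (n : ℝ) ^ 4 * x))
        / (4 * Real.pi * (n : ℝ) ^ 4)| ≤ 3 * |x - y| := by
    calc |2 * (x - y)
        + (Real.sin (4 * Real.pi * (n : ℝ) ^ 4 * y) - Real.sin (4 * Real.pi * (n : ℝ) ^ 4 * x))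
          / (4 * Real.pi * (n : ℝ) ^ 4)|
        ≤ |2 * (x - y)| + |(Real.sin (4 * Real.pi * (n : ℝ) ^ 4 * y)
            - Real.sin (4 * Real.pi * (n : ℝ) ^ 4 * x)) / (4 * Real.pi * (n : ℝ) ^ 4)| :=
          abs_add_le _ _
      _ ≤ 2 * |x - y| + (4 * Real.pi * (n : ℝ) ^ 4 * |x - y|) / (4 * Real.pi * (n : ℝ) ^ 4) := by
          rw [abs_mul, abs_two, abs_div, abs_of_nonneg hk.le]
          gcongr
      _ = 3 * |x - y| := by field_simp; ring
  rw [hdiff, abs_mul, abs_of_nonneg han]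
  calc a n * |2 * (x - y)
      + (Real.sin (4 * Real.pi * (n : ℝ) ^ 4 * y) - Real.sin (4 * Real.pi * (n : ℝ) ^ 4 * x))
        / (4 * Real.pi * (n : ℝ) ^ 4)| ≤ a n * (3 * |x - y|) :=
      mul_le_mul_of_nonneg_left hinner han
    _ = 3 * a n * |x - y| := by ring

lemma vd_lip {a : ℕ → ℝ} {n : ℕ} (hn : 1 ≤ n) (han : 0 ≤ a n) (x y : ℝ) :
    |vd a n x - vd a n y| ≤ 4 * Real.pi * (n : ℝ) ^ 4 * a n * |x - y| := by
  have hk := k_pos hn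
  have hdiff : vd a n x - vd a n y = a n * (Real.cos (4 * Real.pi * (n : ℝ) ^ 4 * x)
      - Real.cos (4 * Real.pi * (n : ℝ) ^ 4 * y)) := by
    rw [vd_eq, vd_eq]; ring
  rw [hdiff, abs_mul, abs_of_nonneg han]
  have hcos : |Real.cos (4 * Real.pi * (n : ℝ) ^ 4 * x)
      - Real.cos (4 * Real.pi * (n : ℝ) ^ 4 * y)| ≤ 4 * Real.pi * (n : ℝ) ^ 4 * |x - y| := by
    calc |Real.cos (4 * Real.pi * (n : ℝ) ^ 4 * x) - Real.cos (4 * Real.pi * (n : ℝ) ^ 4 * y)|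
        ≤ |4 * Real.pi * (n : ℝ) ^ 4 * x - 4 * Real.pi * (n : ℝ) ^ 4 * y| := abs_cos_sub_le _ _
      _ = 4 * Real.pi * (n : ℝ) ^ 4 * |x - y| := by
          rw [← mul_sub, abs_mul, abs_of_nonneg hk.le]
  calc a n * |Real.cos (4 * Real.pi * (n : ℝ) ^ 4 * x)
      - Real.cos (4 * Real.pi * (n : ℝ) ^ 4 * y)|
      ≤ a n * (4 * Real.pi * (n : ℝ) ^ 4 * |x - y|) := mul_le_mul_of_nonneg_left hcos han
    _ = 4 * Real.pi * (n : ℝ) ^ 4 * a n * |x - y| := by ring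

lemma vd_bounds {a : ℕ → ℝ} {n : ℕ} (han : 0 ≤ a n) (x : ℝ) :
    0 ≤ vd a n x ∧ vd a n x ≤ 3 * a n := by
  rw [vd_eq]
  have h1 := Real.neg_one_le_cos (4 * Real.pi * (n : ℝ) ^ 4 * x)
  have h2 := Real.cos_le_one (4 * Real.pi * (n : ℝ) ^ 4 * x)
  constructor <;> nlinarith

lemma wd_bounds {a : ℕ → ℝ} {n : ℕ} (han : 0 ≤ a n) (x : ℝ) :
    0 ≤ wd a n x ∧ wd a n x ≤ 3 * a n := by
  rw [wd_eq]
  have h1 := Real.neg_one_le_cos (4 * Real.pi * (n : ℝ) ^ 4 * x)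
  have h2 := Real.cos_le_one (4 * Real.pi * (n : ℝ) ^ 4 * x)
  constructor <;> nlinarith

lemma vd_add_wd (a : ℕ → ℝ) (n : ℕ) (x : ℝ) : vd a n x + wd a n x = 4 * a n := by
  rw [vd_eq, wd_eq]; ring

lemma vw_dist {a : ℕ → ℝ} {n : ℕ} (hn : 1 ≤ n) (han : 0 ≤ a n) {x : ℝ}
    (hx : x ∈ Ico (0:ℝ) 1) : |v a n x - w a n x| ≤ 4 * a n := by
  have hk := k_pos hn
  obtain ⟨hs1, _⟩ := sin_bounds hn hx.1 hx.2.le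
  have hdiff : v a n x - w a n x = -2 * a n
      + 2 * a n * (Real.sin (4 * Real.pi * (n : ℝ) ^ 4 * x) / (4 * Real.pi * (n : ℝ) ^ 4)) := by
    rw [v_eq hn, w_eq hn]; ring
  have hd : |Real.sin (4 * Real.pi * (n : ℝ) ^ 4 * x) / (4 * Real.pi * (n : ℝ) ^ 4)| ≤ 1 := by
    rw [abs_div, abs_of_nonneg hk.le, div_le_one hk]
    calc |Real.sin (4 * Real.pi * (n : ℝ) ^ 4 * x)| ≤ 4 * Real.pi * (n : ℝ) ^ 4 * x := hs1
      _ ≤ 4 * Real.pi * (n : ℝ) ^ 4 := by nlinarith [hx.1, hx.2.le]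
  rw [hdiff]
  calc |-2 * a n + 2 * a n * (Real.sin (4 * Real.pi * (n : ℝ) ^ 4 * x)
        / (4 * Real.pi * (n : ℝ) ^ 4))|
      ≤ |-2 * a n| + |2 * a n * (Real.sin (4 * Real.pi * (n : ℝ) ^ 4 * x)
        / (4 * Real.pi * (n : ℝ) ^ 4))| := abs_add_le _ _
    _ ≤ 2 * a n + 2 * a n * 1 := by
        have e1 : |(-2:ℝ) * a n| = 2 * a n := by
          rw [abs_mul, abs_of_nonneg han]; norm_num
        have e2 : |(2:ℝ) * a n| = 2 * a n := by rw [abs_mul, abs_of_nonneg han, abs_two]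
        rw [abs_mul, abs_mul, abs_mul, show |(-2:ℝ)| = 2 by norm_num, abs_two,
          abs_of_nonneg han]
        nlinarith [mul_le_mul_of_nonneg_left hd (by linarith : (0:ℝ) ≤ 2 * a n)]
    _ = 4 * a n := by ring

/-- `‖L_n f‖_Lip ≤ a_n (32π n⁴ a_n + 8) ‖f‖_Lip` for every bounded
Lipschitz `f : [0,1) → ℂ`. -/
theorem stmt5 (a : ℕ → ℝ) (ha : StdHyp a) (n : ℕ) (hn : 1 ≤ n)
    (f : ℝ → ℂ) (hf : BddLip f) :
    lipNorm (Ln a n f) ≤ a n * (32 * Real.pi * (n : ℝ) ^ 4 * a n + 8) * lipNorm f := by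
  obtain ⟨h1, h2, hb0, hbs, hbinf⟩ := b_facts ha hn
  obtain ⟨K0, hK0b, hK0l⟩ := hf
  haveI : Nonempty (Ico (0:ℝ) 1) := ⟨⟨0, by norm_num⟩⟩
  have h0mem : (0:ℝ) ∈ Ico (0:ℝ) 1 := by norm_num
  have hK0nn : 0 ≤ K0 := le_trans (norm_nonneg _) (hK0b 0 h0mem)
  set M := supNorm f with hMdef
  set K := lipConst f with hKdef
  have hbddM : BddAbove (Set.range fun x : Ico (0:ℝ) 1 => ‖f x.1‖) := by
    refine ⟨K0, ?_⟩
    rintro r ⟨x, rfl⟩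
    exact hK0b x.1 x.2
  have hMle : ∀ x ∈ Ico (0:ℝ) 1, ‖f x‖ ≤ M := fun x hx =>
    le_ciSup hbddM (⟨x, hx⟩ : Ico (0:ℝ) 1)
  have hMnn : 0 ≤ M := le_trans (norm_nonneg _) (hMle 0 h0mem)
  have hbddK : BddAbove (Set.range fun p : Ico (0:ℝ) 1 × Ico (0:ℝ) 1 =>
      ‖f p.1.1 - f p.2.1‖ / |p.1.1 - p.2.1|) := by
    refine ⟨K0, ?_⟩
    rintro r ⟨p, rfl⟩
    rcases eq_or_ne p.1.1 p.2.1 with h | h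
    · simp [h, hK0nn]
    · rw [div_le_iff₀ (abs_pos.2 (sub_ne_zero.2 h))]
      exact hK0l _ p.1.2 _ p.2.2
  have hKle : ∀ x ∈ Ico (0:ℝ) 1, ∀ y ∈ Ico (0:ℝ) 1, ‖f x - f y‖ ≤ K * |x - y| := by
    intro x hx y hy
    rcases eq_or_ne x y with rfl | h
    · simp
    · have hle := le_ciSup hbddK ((⟨x, hx⟩, ⟨y, hy⟩) : Ico (0:ℝ) 1 × Ico (0:ℝ) 1)
      rw [div_le_iff₀ (abs_pos.2 (sub_ne_zero.2 h))] at hle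
      exact hle
  have hKnn : 0 ≤ K := by
    have := le_ciSup hbddK ((⟨0, h0mem⟩, ⟨0, h0mem⟩) : Ico (0:ℝ) 1 × Ico (0:ℝ) 1)
    simp at this
    rw [hKdef, lipConst]
    exact this
  have h3a : (0:ℝ) ≤ 3 * a n := by linarith
  -- sup norm bound
  have hsup : supNorm (Ln a n f) ≤ 4 * a n * M := by
    rw [supNorm]
    apply ciSup_le
    rintro ⟨x, hx⟩
    have hv := v_mem ha hn hx
    have hw := w_mem ha hn hx
    calc ‖Ln a n f x‖
        ≤ ‖(vd a n x : ℂ) * f (v a n x)‖ + ‖(wd a n x : ℂ) * f (w a n x)‖ := norm_add_le _ _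
      _ = |vd a n x| * ‖f (v a n x)‖ + |wd a n x| * ‖f (w a n x)‖ := by
          rw [norm_mul, norm_mul, Complex.norm_real, Complex.norm_real, Real.norm_eq_abs, Real.norm_eq_abs]
      _ = vd a n x * ‖f (v a n x)‖ + wd a n x * ‖f (w a n x)‖ := by
          rw [abs_of_nonneg (vd_bounds h1.le x).1, abs_of_nonneg (wd_bounds h1.le x).1]
      _ ≤ vd a n x * M + wd a n x * M :=
          add_le_add (mul_le_mul_of_nonneg_left (hMle _ hv) (vd_bounds h1.le x).1)
            (mul_le_mul_of_nonneg_left (hMle _ hw) (wd_bounds h1.le x).1)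
      _ = (vd a n x + wd a n x) * M := by ring
      _ = 4 * a n * M := by rw [vd_add_wd]
  -- Lipschitz bound
  have hC2nn : (0:ℝ) ≤ (18 * a n ^ 2 + 16 * Real.pi * (n:ℝ) ^ 4 * a n ^ 2) * K :=
    mul_nonneg (by positivity) hKnn
  have hdel : ∀ x ∈ Ico (0:ℝ) 1, ∀ y ∈ Ico (0:ℝ) 1,
      ‖Ln a n f x - Ln a n f y‖
        ≤ (18 * a n ^ 2 + 16 * Real.pi * (n:ℝ) ^ 4 * a n ^ 2) * K * |x - y| := by
    intro x hx y hy
    have hvx := v_mem ha hn hx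
    have hvy := v_mem ha hn hy
    have hwx := w_mem ha hn hx
    have hwy := w_mem ha hn hy
    have key : Ln a n f x - Ln a n f y
        = (vd a n x : ℂ) * (f (v a n x) - f (v a n y))
          + (wd a n x : ℂ) * (f (w a n x) - f (w a n y))
          + ((vd a n x : ℂ) - (vd a n y : ℂ)) * (f (v a n y) - f (w a n y)) := by
      have hsum : ((vd a n x : ℂ) + (wd a n x : ℂ))
          = ((vd a n y : ℂ) + (wd a n y : ℂ)) := by
        rw [← Complex.ofReal_add, ← Complex.ofReal_add, vd_add_wd, vd_add_wd]
      simp only [Ln]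
      linear_combination f (w a n y) * hsum
    have e1 : ‖(vd a n x : ℂ) * (f (v a n x) - f (v a n y))‖
        ≤ 3 * a n * (K * (3 * a n * |x - y|)) := by
      rw [norm_mul, Complex.norm_real, Real.norm_eq_abs,
        abs_of_nonneg (vd_bounds h1.le x).1]
      refine mul_le_mul (vd_bounds h1.le x).2 ?_ (norm_nonneg _) h3a
      calc ‖f (v a n x) - f (v a n y)‖ ≤ K * |v a n x - v a n y| := hKle _ hvx _ hvy
        _ ≤ K * (3 * a n * |x - y|) :=
            mul_le_mul_of_nonneg_left (v_lip hn h1.le x y) hKnn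
    have e2 : ‖(wd a n x : ℂ) * (f (w a n x) - f (w a n y))‖
        ≤ 3 * a n * (K * (3 * a n * |x - y|)) := by
      rw [norm_mul, Complex.norm_real, Real.norm_eq_abs,
        abs_of_nonneg (wd_bounds h1.le x).1]
      refine mul_le_mul (wd_bounds h1.le x).2 ?_ (norm_nonneg _) h3a
      calc ‖f (w a n x) - f (w a n y)‖ ≤ K * |w a n x - w a n y| := hKle _ hwx _ hwy
        _ ≤ K * (3 * a n * |x - y|) :=
            mul_le_mul_of_nonneg_left (w_lip hn h1.le x y) hKnn
    have e3 : ‖((vd a n x : ℂ) - (vd a n y : ℂ)) * (f (v a n y) - f (w a n y))‖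
        ≤ 4 * Real.pi * (n:ℝ) ^ 4 * a n * |x - y| * (K * (4 * a n)) := by
      rw [norm_mul]
      have hnrm : ‖(vd a n x : ℂ) - (vd a n y : ℂ)‖ = |vd a n x - vd a n y| := by
        rw [← Complex.ofReal_sub, Complex.norm_real, Real.norm_eq_abs]
      rw [hnrm]
      refine mul_le_mul (vd_lip hn h1.le x y) ?_ (norm_nonneg _) ?_
      · calc ‖f (v a n y) - f (w a n y)‖ ≤ K * |v a n y - w a n y| := hKle _ hvy _ hwy
          _ ≤ K * (4 * a n) :=
              mul_le_mul_of_nonneg_left (vw_dist hn h1.le hy) hKnn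
      · exact mul_nonneg (mul_nonneg (k_pos hn).le h1.le) (abs_nonneg _)
    rw [key]
    calc ‖(vd a n x : ℂ) * (f (v a n x) - f (v a n y))
          + (wd a n x : ℂ) * (f (w a n x) - f (w a n y))
          + ((vd a n x : ℂ) - (vd a n y : ℂ)) * (f (v a n y) - f (w a n y))‖
        ≤ ‖(vd a n x : ℂ) * (f (v a n x) - f (v a n y))
            + (wd a n x : ℂ) * (f (w a n x) - f (w a n y))‖
          + ‖((vd a n x : ℂ) - (vd a n y : ℂ)) * (f (v a n y) - f (w a n y))‖ :=
          norm_add_le _ _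
      _ ≤ ‖(vd a n x : ℂ) * (f (v a n x) - f (v a n y))‖
          + ‖(wd a n x : ℂ) * (f (w a n x) - f (w a n y))‖
          + ‖((vd a n x : ℂ) - (vd a n y : ℂ)) * (f (v a n y) - f (w a n y))‖ := by
          gcongr
          exact norm_add_le _ _
      _ ≤ 3 * a n * (K * (3 * a n * |x - y|)) + 3 * a n * (K * (3 * a n * |x - y|))
          + 4 * Real.pi * (n:ℝ) ^ 4 * a n * |x - y| * (K * (4 * a n)) := by
          exact add_le_add (add_le_add e1 e2) e3
      _ = (18 * a n ^ 2 + 16 * Real.pi * (n:ℝ) ^ 4 * a n ^ 2) * K * |x - y| := by ring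
  have hlip : lipConst (Ln a n f)
      ≤ (18 * a n ^ 2 + 16 * Real.pi * (n:ℝ) ^ 4 * a n ^ 2) * K := by
    rw [lipConst]
    apply ciSup_le
    rintro ⟨⟨x, hx⟩, ⟨y, hy⟩⟩
    rcases eq_or_ne x y with rfl | h
    · simpa using hC2nn
    · rw [div_le_iff₀ (abs_pos.2 (sub_ne_zero.2 h))]
      exact hdel x hx y hy
  -- putting things together
  have hπ : (3:ℝ) ≤ Real.pi := by linarith [Real.pi_gt_three]
  have hn1 : (1:ℝ) ≤ (n:ℝ) := by exact_mod_cast hn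
  have hn4 : (1:ℝ) ≤ (n:ℝ) ^ 4 := one_le_pow₀ hn1
  have hP : (3:ℝ) ≤ Real.pi * (n:ℝ) ^ 4 := by nlinarith
  have hfinal : 4 * a n * M + (18 * a n ^ 2 + 16 * Real.pi * (n:ℝ) ^ 4 * a n ^ 2) * K
      ≤ a n * (32 * Real.pi * (n : ℝ) ^ 4 * a n + 8) * (M + K) := by
    nlinarith [mul_nonneg (mul_nonneg (by linarith : (0:ℝ) ≤ Real.pi * (n:ℝ)^4)
        (sq_nonneg (a n))) hMnn,
      mul_nonneg (mul_nonneg (by linarith : (0:ℝ) ≤ Real.pi * (n:ℝ)^4)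
        (sq_nonneg (a n))) hKnn,
      mul_nonneg h1.le hMnn, mul_nonneg h1.le hKnn,
      mul_nonneg (mul_nonneg (by linarith : (0:ℝ) ≤ 1/4 - a n) h1.le) hKnn]
  calc lipNorm (Ln a n f)
      = supNorm (Ln a n f) + lipConst (Ln a n f) := rfl
    _ ≤ 4 * a n * M + (18 * a n ^ 2 + 16 * Real.pi * (n:ℝ) ^ 4 * a n ^ 2) * K :=
        add_le_add hsup hlip
    _ ≤ a n * (32 * Real.pi * (n : ℝ) ^ 4 * a n + 8) * (M + K) := hfinal
    _ = a n * (32 * Real.pi * (n : ℝ) ^ 4 * a n + 8) * lipNorm f := by rw [lipNorm]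

end Gouezel
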